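/- Let W be a finite-dimensional real inner product space, C ⊆ W the closed convex cone of positive semi-definite Hermitian n×n matrices (with inner product ⟨A,B⟩ = Tr(AB)), and L ⊆ W a linear subspace. Then L contains a positive definite matrix if and only if the orthogonal complement of L contains no nonzero positive semi-definite matrix. -/

import Mathlib

open Matrix
open scoped ComplexOrder

namespace PSDConeDuality

variable {n : ℕ}

/-! ### Auxiliary lemmas -/

lemma psd_trace_zero {M : Matrix (Fin n) (Fin n) ℂ} (hM : M.PosSemidef)
    (h : M.trace = 0) : M = 0 := by
  have hd : ∀ i, M i i = 0 := by
    have hnn : ∀ i ∈ Finset.univ, 0 ≤ M i i := by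
      intro i _
      simpa [Matrix.mulVec_single, Pi.single_apply, dotProduct] using hM.dotProduct_mulVec_nonneg (Pi.single i 1)
    intro i
    have := (Finset.sum_eq_zero_iff_of_nonneg hnn).mp (by simpa [Matrix.trace, Matrix.diag] using h)
    exact this i (Finset.mem_univ i)
  ext i j
  have hcol := (hM.dotProduct_mulVec_zero_iff (Pi.single j 1)).mp (by
    simpa [Matrix.mulVec_single, Pi.single_apply, dotProduct] using hd j)
  have := congrFun hcol i
  simpa [Matrix.mulVec_single] using this

lemma forward_dir {A N : Matrix (Fin n) (Fin n) ℂ} (hA : A.PosDef) (hN : N.PosSemidef)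
    (h : (A * N).trace = 0) : N = 0 := by
  open scoped MatrixOrder in set S := CFC.sqrt N with hSdef
  have hS : S.PosSemidef := by open scoped MatrixOrder in exact (CFC.sqrt_nonneg N).posSemidef
  have hSS : S * S = N := by open scoped MatrixOrder in exact CFC.sqrt_mul_sqrt_self N hN.nonneg
  have hherm : Sᴴ = S := hS.isHermitian
  have hMpsd : (Sᴴ * A * S).PosSemidef := hA.posSemidef.conjTranspose_mul_mul_same S
  have htr : (Sᴴ * A * S).trace = 0 := by
    rw [hherm]
    calc (S * A * S).trace = (S * (A * S)).trace := by rw [Matrix.mul_assoc]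
      _ = ((A * S) * S).trace := Matrix.trace_mul_comm _ _
      _ = (A * (S * S)).trace := by rw [Matrix.mul_assoc]
      _ = 0 := by rw [hSS, h]
  have hM0 : Sᴴ * A * S = 0 := psd_trace_zero hMpsd htr
  have hSz : S = 0 := by
    ext i j
    have hx : S *ᵥ Pi.single j 1 = 0 := by
      by_contra hne
      have := hA.dotProduct_mulVec_pos hne
      have hq : star (Pi.single j 1 : Fin n → ℂ) ⬝ᵥ (Sᴴ * A * S) *ᵥ (Pi.single j 1) = 0 := by
        rw [hM0]; simp
      rw [← Matrix.mulVec_mulVec, ← Matrix.mulVec_mulVec, Matrix.dotProduct_mulVec,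
        Matrix.vecMul_conjTranspose] at hq
      simp only [star_star] at hq
      exact this.ne' hq
    have := congrFun hx i
    simpa [Matrix.mulVec_single] using this
  rw [← hSS, hSz, Matrix.mul_zero]

lemma std_split (i j : Fin n) (z : ℂ) :
    Matrix.single i j z = z.re • Matrix.single i j (1:ℂ) + z.im • Matrix.single i j Complex.I := by
  ext a b
  simp only [Matrix.single, Matrix.add_apply, Matrix.smul_apply, Matrix.of_apply]
  split_ifs <;> simp [Complex.ext_iff]

lemma rep_lemma (f : Matrix (Fin n) (Fin n) ℂ →L[ℝ] ℝ) :
    ∃ N : Matrix (Fin n) (Fin n) ℂ, ∀ M, f M = ((M * N).trace).re := by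
  refine ⟨Matrix.of fun j i => (f (Matrix.single i j 1) : ℂ) - Complex.I * f (Matrix.single i j Complex.I), fun M => ?_⟩
  have hM : M = ∑ i : Fin n, ∑ j : Fin n,
      ((M i j).re • Matrix.single i j (1:ℂ) + (M i j).im • Matrix.single i j Complex.I) := by
    conv_lhs => rw [matrix_eq_sum_single M]
    exact Finset.sum_congr rfl fun i _ => Finset.sum_congr rfl fun j _ => std_split i j (M i j)
  have htr : (M * (Matrix.of fun j i => (f (Matrix.single i j 1) : ℂ) - Complex.I * f (Matrix.single i j Complex.I))).trace
      = ∑ i : Fin n, ∑ j : Fin n, (M i j * ((f (Matrix.single i j 1) : ℂ) - Complex.I * f (Matrix.single i j Complex.I))) := by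
    rw [Matrix.trace]
    simp only [Matrix.diag, Matrix.mul_apply, Matrix.of_apply]
  rw [htr]
  conv_lhs => rw [hM]
  rw [map_sum]
  push_cast [Complex.re_sum]
  refine Finset.sum_congr rfl fun i _ => ?_
  rw [map_sum]
  refine Finset.sum_congr rfl fun j _ => ?_
  rw [map_add, _root_.map_smul, _root_.map_smul]
  simp [Complex.ext_iff, Complex.mul_re, Complex.mul_im, smul_eq_mul]

/-! ### The open convex set of "positive-definite-like" matrices -/

def sPD (n : ℕ) : Set (Matrix (Fin n) (Fin n) ℂ) :=
  {M | ∀ x : Fin n → ℂ, ‖x‖ = 1 → 0 < (star x ⬝ᵥ M *ᵥ x).re}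

lemma quad_cont (M : Matrix (Fin n) (Fin n) ℂ) :
    Continuous fun x : Fin n → ℂ => (star x ⬝ᵥ M *ᵥ x).re := by
  apply Complex.continuous_re.comp
  unfold dotProduct mulVec
  apply continuous_finset_sum
  intro i _
  apply Continuous.mul
  · exact continuous_star.comp (continuous_apply i)
  · exact continuous_finset_sum _ fun j _ => continuous_const.mul (continuous_apply j)

lemma quad_bound (Δ : Matrix (Fin n) (Fin n) ℂ) (x : Fin n → ℂ) (hx : ∀ i, ‖x i‖ ≤ 1) :
    ‖star x ⬝ᵥ Δ *ᵥ x‖ ≤ ∑ i, ∑ j, ‖Δ i j‖ := by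
  unfold dotProduct mulVec
  refine (norm_sum_le _ _).trans (Finset.sum_le_sum fun i _ => ?_)
  rw [Pi.star_apply, norm_mul, norm_star]
  calc ‖x i‖ * ‖∑ j, Δ i j * x j‖ ≤ 1 * ∑ j, ‖Δ i j * x j‖ := by
        apply mul_le_mul (hx i) (norm_sum_le _ _) (norm_nonneg _) zero_le_one
    _ = ∑ j, ‖Δ i j‖ * ‖x j‖ := by simp [norm_mul]
    _ ≤ ∑ j, ‖Δ i j‖ * 1 := Finset.sum_le_sum fun j _ =>
        mul_le_mul_of_nonneg_left (hx j) (norm_nonneg _)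
    _ = ∑ j, ‖Δ i j‖ := by simp

lemma sPD_isOpen (hn : 0 < n) : IsOpen (sPD n) := by
  rw [isOpen_iff_mem_nhds]
  intro M₀ hM₀
  haveI : Nonempty (Fin n) := Fin.pos_iff_nonempty.mp hn
  obtain ⟨x₀, hx₀s, hx₀min⟩ := (isCompact_sphere (0 : Fin n → ℂ) 1).exists_isMinOn
    (NormedSpace.sphere_nonempty.mpr zero_le_one) (quad_cont M₀).continuousOn
  have hx₀ : ‖x₀‖ = 1 := by simpa using hx₀s
  set c : ℝ := (star x₀ ⬝ᵥ M₀ *ᵥ x₀).re with hc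
  have hcpos : 0 < c := hM₀ x₀ hx₀
  set δ : ℝ := c / (2 * n ^ 2) with hδ
  have hδpos : 0 < δ := by positivity
  have hnhds : {M : Matrix (Fin n) (Fin n) ℂ | ∀ i j, ‖M i j - M₀ i j‖ < δ} ∈ nhds M₀ := by
    have : {M : Matrix (Fin n) (Fin n) ℂ | ∀ i j, ‖M i j - M₀ i j‖ < δ}
        = ⋂ i, ⋂ j, (fun M : Matrix (Fin n) (Fin n) ℂ => M i j) ⁻¹' Metric.ball (M₀ i j) δ := by
      ext M
      simp [Metric.mem_ball, dist_eq_norm, Set.mem_iInter]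
    rw [this]
    refine Filter.iInter_mem.mpr fun i => Filter.iInter_mem.mpr fun j => ?_
    exact ((continuous_apply j).comp (continuous_apply i)).continuousAt.preimage_mem_nhds
      (Metric.ball_mem_nhds _ hδpos)
  refine Filter.mem_of_superset hnhds ?_
  intro M hM x hx
  have hxe : ∀ i, ‖x i‖ ≤ 1 := fun i => hx ▸ norm_le_pi_norm x i
  have hsplit : star x ⬝ᵥ M *ᵥ x = star x ⬝ᵥ M₀ *ᵥ x + star x ⬝ᵥ (M - M₀) *ᵥ x := by
    rw [Matrix.sub_mulVec, dotProduct_sub]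
    ring
  have hb := quad_bound (M - M₀) x hxe
  have hbb : ∑ i, ∑ j, ‖(M - M₀) i j‖ ≤ c / 2 := by
    calc ∑ i, ∑ j, ‖(M - M₀) i j‖ ≤ ∑ _i : Fin n, ∑ _j : Fin n, δ := by
          refine Finset.sum_le_sum fun i _ => Finset.sum_le_sum fun j _ => ?_
          exact le_of_lt (by simpa [Matrix.sub_apply] using hM i j)
      _ = (n : ℝ) ^ 2 * δ := by simp [pow_two]; ring
      _ = c / 2 := by
          have : (n:ℝ) ≠ 0 := by positivity
          rw [hδ]
          field_simp
  have hre : |(star x ⬝ᵥ (M - M₀) *ᵥ x).re| ≤ c / 2 :=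
    (Complex.abs_re_le_norm _).trans (hb.trans hbb)
  have hcx : c ≤ (star x ⬝ᵥ M₀ *ᵥ x).re := hx₀min (by simpa [Metric.mem_sphere, dist_eq_norm] using hx)
  rw [hsplit, Complex.add_re]
  have := abs_le.mp hre
  linarith [hcx, this.1]

lemma sPD_convex : Convex ℝ (sPD n) := by
  intro M hM M' hM' a b ha hb hab
  intro x hx
  have : star x ⬝ᵥ (a • M + b • M') *ᵥ x
      = a • (star x ⬝ᵥ M *ᵥ x) + b • (star x ⬝ᵥ M' *ᵥ x) := by
    rw [Matrix.add_mulVec, dotProduct_add, Matrix.smul_mulVec,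
      Matrix.smul_mulVec, dotProduct_smul, dotProduct_smul]
  rw [this]
  simp only [Complex.add_re, Complex.real_smul, Complex.mul_re, Complex.ofReal_re,
    Complex.ofReal_im, zero_mul, sub_zero]
  rcases ha.lt_or_eq with ha' | ha'
  · rcases hb.lt_or_eq with hb' | hb'
    · have := hM x hx; have := hM' x hx; nlinarith
    · have := hM x hx; rw [← hb']; nlinarith
  · have := hM' x hx; rw [← ha']; simp only [zero_mul, zero_add]
    have hb1 : b = 1 := by linarith
    nlinarith

lemma herm_quad_star {A : Matrix (Fin n) (Fin n) ℂ} (hA : A.IsHermitian) (x : Fin n → ℂ) :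
    star (star x ⬝ᵥ A *ᵥ x) = star x ⬝ᵥ A *ᵥ x := by
  calc star (star x ⬝ᵥ A *ᵥ x) = star (A *ᵥ x) ⬝ᵥ x := (star_dotProduct _ _).symm
    _ = (star x ᵥ* Aᴴ) ⬝ᵥ x := by rw [star_mulVec]
    _ = star x ⬝ᵥ (Aᴴ *ᵥ x) := (Matrix.dotProduct_mulVec _ _ _).symm
    _ = star x ⬝ᵥ A *ᵥ x := by rw [hA.eq]

lemma mem_sPD_of_posDef {A : Matrix (Fin n) (Fin n) ℂ} (hA : A.PosDef) : A ∈ sPD n := by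
  intro x hx
  have hx0 : x ≠ 0 := by intro h; rw [h] at hx; simp at hx
  simpa using hA.re_dotProduct_pos hx0

lemma posDef_of_mem_sPD {A : Matrix (Fin n) (Fin n) ℂ} (hA : A.IsHermitian)
    (h : A ∈ sPD n) : A.PosDef := by
  refine PosDef.of_dotProduct_mulVec_pos hA fun x hx => ?_
  set y : Fin n → ℂ := ‖x‖⁻¹ • x with hy
  have hxn : (0:ℝ) < ‖x‖ := norm_pos_iff.mpr hx
  have hyn : ‖y‖ = 1 := by
    rw [hy, norm_smul]
    simp [abs_of_pos (inv_pos.mpr hxn), inv_mul_cancel₀ hxn.ne']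
  have hq := h y hyn
  have hsc : star y ⬝ᵥ A *ᵥ y = (‖x‖⁻¹ : ℂ) * (‖x‖⁻¹ : ℂ) * (star x ⬝ᵥ A *ᵥ x) := by
    rw [hy]
    rw [star_smul, Matrix.mulVec_smul, smul_dotProduct, dotProduct_smul]
    simp [smul_eq_mul]
    try ring
  have him : (star x ⬝ᵥ A *ᵥ x).im = 0 := by
    have := herm_quad_star hA x
    have := Complex.conj_eq_iff_im.mp this
    exact this
  have hre : 0 < (star x ⬝ᵥ A *ᵥ x).re := by
    rw [hsc] at hq
    have : ((‖x‖⁻¹ : ℂ) * (‖x‖⁻¹ : ℂ) * (star x ⬝ᵥ A *ᵥ x)).re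
        = ‖x‖⁻¹ * ‖x‖⁻¹ * (star x ⬝ᵥ A *ᵥ x).re := by
      simp [Complex.mul_re, Complex.mul_im, him]
      try ring
    rw [this] at hq
    nlinarith [inv_pos.mpr hxn]
  rw [Complex.lt_def]
  constructor
  · simpa using hre
  · simpa using him.symm

lemma dot_self_re_pos {y : Fin n → ℂ} (hy : y ≠ 0) : 0 < (star y ⬝ᵥ y).re := by
  obtain ⟨i, hi⟩ := Function.ne_iff.mp hy
  have hval : (star y ⬝ᵥ y).re = ∑ j, Complex.normSq (y j) := by
    simp [dotProduct, Complex.re_sum, Complex.normSq_apply, Complex.mul_re]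
    try ring
  rw [hval]
  refine Finset.sum_pos' (fun j _ => Complex.normSq_nonneg _) ⟨i, Finset.mem_univ i, ?_⟩
  exact (Complex.normSq_pos).mpr (by simpa using hi)

lemma one_mem_sPD : (1 : Matrix (Fin n) (Fin n) ℂ) ∈ sPD n := by
  intro x hx
  have hx0 : x ≠ 0 := by intro h; rw [h] at hx; simp at hx
  rw [Matrix.one_mulVec]
  exact dot_self_re_pos hx0

/-! ### Rank-one matrices -/

def outer (x : Fin n → ℂ) : Matrix (Fin n) (Fin n) ℂ := Matrix.of fun i j => x i * star (x j)

lemma outer_quad (x y : Fin n → ℂ) :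
    star y ⬝ᵥ (outer x) *ᵥ y = (star x ⬝ᵥ y) * star (star x ⬝ᵥ y) := by
  simp only [outer, dotProduct, mulVec, Matrix.of_apply, star_sum, star_mul', star_star,
    Finset.mul_sum, Finset.sum_mul]
  refine Finset.sum_congr rfl fun j _ => Finset.sum_congr rfl fun i _ => ?_
  simp only [dotProduct, Pi.star_apply, star_star]
  ring

lemma outer_trace (x : Fin n → ℂ) (P : Matrix (Fin n) (Fin n) ℂ) :
    ((outer x) * P).trace = star x ⬝ᵥ P *ᵥ x := by
  simp only [outer, Matrix.trace, Matrix.diag, Matrix.mul_apply, Matrix.of_apply,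
    dotProduct, mulVec, Finset.mul_sum]
  rw [Finset.sum_comm]
  refine Finset.sum_congr rfl fun j _ => Finset.sum_congr rfl fun i _ => ?_
  simp only [Pi.star_apply]
  ring

lemma outer_add_smul_one_mem_sPD (x : Fin n → ℂ) {ε : ℝ} (hε : 0 < ε) :
    outer x + ε • (1 : Matrix (Fin n) (Fin n) ℂ) ∈ sPD n := by
  intro y hy
  have hy0 : y ≠ 0 := by intro h; rw [h] at hy; simp at hy
  have hsplit : star y ⬝ᵥ (outer x + ε • (1 : Matrix (Fin n) (Fin n) ℂ)) *ᵥ y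
      = (star x ⬝ᵥ y) * star (star x ⬝ᵥ y) + ε • (star y ⬝ᵥ y) := by
    rw [Matrix.add_mulVec, dotProduct_add, outer_quad, Matrix.smul_mulVec,
      dotProduct_smul, Matrix.one_mulVec]
  rw [hsplit]
  rw [Complex.add_re]
  have h1 : ((star x ⬝ᵥ y) * star (star x ⬝ᵥ y)).re = Complex.normSq (star x ⬝ᵥ y) := by
    rw [Complex.star_def, Complex.mul_conj]
    simp
  have h2 : (ε • (star y ⬝ᵥ y) : ℂ).re = ε * (star y ⬝ᵥ y).re := by
    simp [Complex.real_smul, Complex.mul_re]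
  rw [h1, h2]
  have := dot_self_re_pos hy0
  nlinarith [Complex.normSq_nonneg (star x ⬝ᵥ y)]

/-! ### The ε-limit argument -/

lemma nonneg_of_forall_eps {a t : ℝ} (h : ∀ ε : ℝ, 0 < ε → 0 < a + ε * t) : 0 ≤ a := by
  by_contra h'
  push_neg at h'
  have hd : (0:ℝ) < |t| + 1 := by positivity
  set ε : ℝ := -a / (|t| + 1) with hεdef
  have hε : 0 < ε := div_pos (by linarith) hd
  have := h ε hε
  have h1 : ε * t ≤ ε * |t| := mul_le_mul_of_nonneg_left (le_abs_self t) hε.le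
  have h2 : ε * |t| ≤ ε * (|t| + 1) := by nlinarith
  have h3 : ε * (|t| + 1) = -a := div_mul_cancel₀ _ hd.ne'
  linarith

end PSDConeDuality

open PSDConeDuality

/-- Duality for the PSD cone (the `V = ℂⁿ` case of Lemma 4.3): a real subspace
`L` of Hermitian matrices contains a positive definite matrix if and only if
the orthogonal complement of `L` (with respect to `⟨A,B⟩ = Tr(AB)`) contains
no nonzero positive semi-definite matrix. -/
theorem psd_cone_duality {n : ℕ} (L : Submodule ℝ (Matrix (Fin n) (Fin n) ℂ))
    (hL : ∀ A ∈ L, A.IsHermitian) :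
    (∃ A ∈ L, A.PosDef) ↔
      ∀ N : Matrix (Fin n) (Fin n) ℂ, N.PosSemidef →
        (∀ A ∈ L, (A * N).trace = 0) → N = 0 := by
  constructor
  · rintro ⟨A, hAL, hA⟩ N hN hperp
    exact forward_dir hA hN (hperp A hAL)
  · intro h
    rcases Nat.eq_zero_or_pos n with hn | hn
    · subst hn
      refine ⟨0, L.zero_mem, ?_⟩
      refine ⟨by simp [Matrix.IsHermitian], fun x hx => absurd ?_ hx⟩
      ext i
      exact absurd i.2 (by omega)
    · by_contra hno
      push_neg at hno
      -- separate L from the open convex set sPD n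
      have hdisj : Disjoint (sPD n) (L : Set (Matrix (Fin n) (Fin n) ℂ)) := by
        rw [Set.disjoint_left]
        intro A hAs hAL
        exact hno A hAL (posDef_of_mem_sPD (hL A hAL) hAs)
      obtain ⟨f, u, hfs, hfL⟩ := geometric_hahn_banach_open sPD_convex (sPD_isOpen hn)
        L.convex hdisj
      -- f vanishes on L
      have hf0 : ∀ A ∈ L, f A = 0 := by
        intro A hA
        by_contra hne
        have hmem : ((u - 1) / f A) • A ∈ L := L.smul_mem _ hA
        have := hfL _ hmem
        rw [f.map_smul] at this
        simp only [smul_eq_mul] at this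
        rw [div_mul_cancel₀ _ hne] at this
        linarith
      have hu0 : u ≤ 0 := by simpa using hfL 0 L.zero_mem
      have hf1 : f 1 < u := hfs 1 one_mem_sPD
      -- represent f by a matrix
      obtain ⟨N₀, hN₀⟩ := rep_lemma f
      set P : Matrix (Fin n) (Fin n) ℂ := -N₀ with hP
      have hPs : ∀ M ∈ sPD n, 0 < ((M * P).trace).re := by
        intro M hM
        have := hfs M hM
        rw [hN₀] at this
        have : ((M * N₀).trace).re < 0 := lt_of_lt_of_le this hu0
        simpa [hP, Matrix.mul_neg] using this
      have hPL : ∀ A ∈ L, ((A * P).trace).re = 0 := by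
        intro A hA
        have := hf0 A hA
        rw [hN₀] at this
        simpa [hP, Matrix.mul_neg] using this
      -- quadratic form of P has nonneg real part
      have hPquad : ∀ x : Fin n → ℂ, 0 ≤ (star x ⬝ᵥ P *ᵥ x).re := by
        intro x
        have key : ∀ ε : ℝ, 0 < ε →
            0 < (star x ⬝ᵥ P *ᵥ x).re + ε * (P.trace).re := by
          intro ε hε
          have hmem := outer_add_smul_one_mem_sPD x hε
          have := hPs _ hmem
          have htr : ((outer x + ε • (1 : Matrix (Fin n) (Fin n) ℂ)) * P).trace
              = (star x ⬝ᵥ P *ᵥ x) + (ε : ℂ) * P.trace := by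
            rw [Matrix.add_mul, Matrix.trace_add, outer_trace, Matrix.smul_mul,
              Matrix.one_mul, Matrix.trace_smul]
            simp [Complex.real_smul]
          rw [htr] at this
          simpa [Complex.add_re, Complex.mul_re] using this
        exact nonneg_of_forall_eps key
      -- the Hermitian part of P
      set N : Matrix (Fin n) (Fin n) ℂ := P + Pᴴ with hNdef
      have hNherm : N.IsHermitian := by
        rw [Matrix.IsHermitian, hNdef, Matrix.conjTranspose_add, Matrix.conjTranspose_conjTranspose,
          add_comm]
      have hNpsd : N.PosSemidef := by
        refine PosSemidef.of_dotProduct_mulVec_nonneg hNherm fun x => ?_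
        have hsplit : star x ⬝ᵥ N *ᵥ x
            = (star x ⬝ᵥ P *ᵥ x) + star (star x ⬝ᵥ P *ᵥ x) := by
          rw [hNdef, Matrix.add_mulVec, dotProduct_add]
          congr 1
          calc star x ⬝ᵥ Pᴴ *ᵥ x = (star x ᵥ* Pᴴ) ⬝ᵥ x := Matrix.dotProduct_mulVec _ _ _
            _ = star (P *ᵥ x) ⬝ᵥ x := by rw [star_mulVec]
            _ = star (star x ⬝ᵥ P *ᵥ x) := star_dotProduct _ _
        rw [hsplit, Complex.le_def]
        constructor
        · simp only [Complex.add_re, Complex.zero_re]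
          have := hPquad x
          simp only [Complex.conj_re, RCLike.star_def]
          linarith [hPquad x]
        · simp [Complex.add_im]
      have hNperp : ∀ A ∈ L, (A * N).trace = 0 := by
        intro A hA
        have hAh : Aᴴ = A := (hL A hA).eq
        have h1 : (A * Pᴴ).trace = star ((A * P).trace) := by
          have : A * Pᴴ = (P * A)ᴴ := by
            rw [Matrix.conjTranspose_mul, hAh]
          rw [this, Matrix.trace_conjTranspose, Matrix.trace_mul_comm]
        have h2 := hPL A hA
        rw [hNdef, Matrix.mul_add, Matrix.trace_add, h1]
        have : ((A * P).trace) + star ((A * P).trace) = 2 * ((A * P).trace).re := by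
          rw [Complex.star_def, Complex.add_conj]
          push_cast
          ring
        rw [this, h2]
        simp
      have hNne : N ≠ 0 := by
        intro hN0
        have htrN : N.trace = 2 * (P.trace).re := by
          rw [hNdef, Matrix.trace_add, Matrix.trace_conjTranspose, Complex.star_def, Complex.add_conj]
          push_cast
          ring
        have hpos : 0 < (P.trace).re := by
          have := hPs 1 one_mem_sPD
          simpa using this
        rw [hN0] at htrN
        simp at htrN
        rw [htrN] at hpos
        exact lt_irrefl _ (by exact_mod_cast hpos)
      exact hNne (h N hNpsd hNperp)
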